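/- Let g(x) = (I−A)x + b in the fixed-point problem x = g(x), where A ∈ ℝ^{d×d} is symmetric positive definite and b ∈ ℝ^d. For the restarted Type-I/Type-II ST-AM, if m_{k+1} ≥ 2 at the (k+1)-th iteration, then Ap_k = t_k^{(m_k−1)}p_{k−1} + t_k^{(m_k)}p_k + t_k^{(m_k+1)}p_{k+1}, where p_{k−m_k} := 0 ∈ ℝ^d and the coefficients are t_k^{(m_k−1)} = φ_{k−1}/(β_{k−1}(1 − Γ_k^{(m_k)})), t_k^{(m_k)} = (1/(1 − Γ_k^{(m_k)}))(1/β_{k−1} − φ_k/β_k), t_k^{(m_k+1)} = −1/(β_k(1 − Γ_k^{(m_k)})), with φ_k := 0 if m_k = 0 and φ_k := Γ_k^{(m_k)} + ζ_{k+1}^{(m_k)} = Γ_{k+1}^{(m_k)} = (v_kᵀr_{k+1})/(v_kᵀq_k) if m_k ≥ 1. Consequently there is a tridiagonal matrix T̄_k ∈ ℝ^{(m_k+1)×m_k} such that AP_k = P_{k+1}T̄_k = P_kT_k + p_{k+1}·t_k^{(m_k+1)}e_{m_k}ᵀ, where T_k is obtained from T̄_k by deleting its last row and e_{m_k} is the m_k-th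 standard basis vector. -/

import Mathlib

open scoped InnerProductSpace
open Finset Matrix

noncomputable section

/-- Euclidean space `ℝ^d`. -/
abbrev E (d : ℕ) := EuclideanSpace ℝ (Fin d)

/-- A run of the (restarted) short-term recurrence Anderson mixing (ST-AM).
`typeII = false` is the Type-I method and `typeII = true` the Type-II method;
`mem k` is the memory size `m_k`.  At iteration `k`, `ζ k 0`/`ζ k 1` are the
coefficients of `p_{k-2}`/`p_{k-1}` in the modified vector pair and
`Γ k 0`/`Γ k 1` the coefficients of `p_{k-1}`/`p_k` in the update; in the
paper's `1`-based notation `Γ_k^{(m_k)} = Γ k 1`, `Γ_k^{(m_k-1)} = Γ k 0`,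
`ζ_{k+1}^{(m_k)} = ζ (k+1) 1`. -/
structure STRun (d : ℕ) where
  g : E d → E d
  typeII : Bool
  β : ℕ → ℝ
  mem : ℕ → ℕ
  x : ℕ → E d
  p : ℕ → E d
  q : ℕ → E d
  ζ : ℕ → ℕ → ℝ
  Γ : ℕ → ℕ → ℝ

namespace STRun

variable {d : ℕ} (S : STRun d)

/-- Residual `r_k = g(x_k) - x_k`. -/
def r (k : ℕ) : E d := S.g (S.x k) - S.x k

/-- `v_k = p_k` (Type-I) or `v_k = q_k` (Type-II). -/
def v (k : ℕ) : E d := if S.typeII then S.q k else S.p k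

/-- `x̄_k = x_k - (p_{k-1}, p_k) Γ_k` (only existing pairs are used). -/
def xbar (k : ℕ) : E d :=
  S.x k - (if 2 ≤ S.mem k then S.Γ k 0 • S.p (k - 1) else 0)
        - (if 1 ≤ S.mem k then S.Γ k 1 • S.p k else 0)

/-- `r̄_k = r_k - (q_{k-1}, q_k) Γ_k` (only existing pairs are used). -/
def rbar (k : ℕ) : E d :=
  S.r k - (if 2 ≤ S.mem k then S.Γ k 0 • S.q (k - 1) else 0)
        - (if 1 ≤ S.mem k then S.Γ k 1 • S.q k else 0)

/-- The defining relations of the restarted ST-AM with restart parameters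
`m`, `τ`, `η`. -/
structure IsRestarted (m : ℕ) (τ η : ℝ) : Prop where
  mem_zero : S.mem 0 = 0
  mem_succ : ∀ k, S.mem (k + 1) = S.mem k + 1 ∨ S.mem (k + 1) = 0
  mem_le_self : ∀ k, S.mem k ≤ k
  mem_le : ∀ k, S.mem k ≤ m
  res_ctrl : ∀ k, 1 ≤ S.mem k → ‖S.r k‖ ≤ η * ‖S.r (k - S.mem k)‖
  vq_ctrl : ∀ k, 1 ≤ S.mem k →
    τ * |⟪S.v (k - S.mem k + 1), S.q (k - S.mem k + 1)⟫_ℝ| ≤ |⟪S.v k, S.q k⟫_ℝ|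
  pair_one : ∀ k, S.mem k = 1 →
    S.p k = S.x k - S.x (k - 1) ∧ S.q k = S.r k - S.r (k - 1)
  pair_two : ∀ k, S.mem k = 2 →
    S.p k = (S.x k - S.x (k - 1)) - S.ζ k 1 • S.p (k - 1) ∧
    S.q k = (S.r k - S.r (k - 1)) - S.ζ k 1 • S.q (k - 1) ∧
    ⟪S.v (k - 1), S.q k⟫_ℝ = 0
  pair_three : ∀ k, 3 ≤ S.mem k →
    S.p k = (S.x k - S.x (k - 1)) - S.ζ k 0 • S.p (k - 2) - S.ζ k 1 • S.p (k - 1) ∧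
    S.q k = (S.r k - S.r (k - 1)) - S.ζ k 0 • S.q (k - 2) - S.ζ k 1 • S.q (k - 1) ∧
    ⟪S.v (k - 2), S.q k⟫_ℝ = 0 ∧ ⟪S.v (k - 1), S.q k⟫_ℝ = 0
  orth_last : ∀ k, 1 ≤ S.mem k → ⟪S.v k, S.rbar k⟫_ℝ = 0
  orth_prev : ∀ k, 2 ≤ S.mem k → ⟪S.v (k - 1), S.rbar k⟫_ℝ = 0
  update : ∀ k, S.x (k + 1) = S.xbar k + S.β k • S.rbar k

end STRun

/-- Assumption H of the paper, together with the quantitative constants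
`ρ̂ = ρ`, `κ̂ = κh`, `μ`, `L` appearing in (4.4)–(4.6). -/
structure AssumptionH (d : ℕ) (g : E d → E d) (xs : E d)
    (Dh : E d → (E d →L[ℝ] E d)) (ρ κh μ L : ℝ) : Prop where
  ρ_pos : 0 < ρ
  κ_pos : 0 < κh
  μ_pos : 0 < μ
  L_pos : 0 < L
  fixed : g xs = xs
  deriv : ∀ x ∈ Metric.closedBall xs ρ, HasFDerivAt (fun y => y - g y) (Dh x) x
  norm_lower : ∀ x ∈ Metric.closedBall xs ρ, ∀ y : E d, μ * ‖y‖ ≤ ‖Dh x y‖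
  norm_upper : ∀ x ∈ Metric.closedBall xs ρ, ∀ y : E d, ‖Dh x y‖ ≤ L * ‖y‖
  inner_lower : ∀ x ∈ Metric.closedBall xs ρ, ∀ y : E d, μ * ‖y‖ ^ 2 ≤ ⟪y, Dh x y⟫_ℝ
  inner_upper : ∀ x ∈ Metric.closedBall xs ρ, ∀ y : E d, ⟪y, Dh x y⟫_ℝ ≤ L * ‖y‖ ^ 2
  taylor : ∀ x ∈ Metric.closedBall xs ρ,
    ‖(x - g x) - Dh xs (x - xs)‖ ≤ κh / 2 * ‖x - xs‖ ^ 2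

/-- Matrix–vector multiplication on Euclidean space. -/
def mvE {d m : ℕ} (A : Matrix (Fin d) (Fin m) ℝ) (u : E m) : E d :=
  Matrix.toEuclideanLin A u

section Aux

variable {d : ℕ}

lemma mvE_add (A : Matrix (Fin d) (Fin d) ℝ) (x y : E d) :
    mvE A (x + y) = mvE A x + mvE A y := by simp [mvE]

lemma mvE_sub (A : Matrix (Fin d) (Fin d) ℝ) (x y : E d) :
    mvE A (x - y) = mvE A x - mvE A y := by simp [mvE]

lemma mvE_smul (A : Matrix (Fin d) (Fin d) ℝ) (c : ℝ) (x : E d) :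
    mvE A (c • x) = c • mvE A x := by simp [mvE]

lemma mvE_neg (A : Matrix (Fin d) (Fin d) ℝ) (x : E d) :
    mvE A (-x) = -(mvE A x) := by simp [mvE]

lemma mvE_zero (A : Matrix (Fin d) (Fin d) ℝ) : mvE A (0 : E d) = 0 := by simp [mvE]

lemma mvE_symm (A : Matrix (Fin d) (Fin d) ℝ) (h : Aᵀ = A) (x y : E d) :
    ⟪mvE A x, y⟫_ℝ = ⟪x, mvE A y⟫_ℝ := by
  have hA : A.IsHermitian := by
    unfold Matrix.IsHermitian
    rw [Matrix.conjTranspose_eq_transpose_of_trivial, h]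
  exact (Matrix.isHermitian_iff_isSymmetric.mp hA) x y

/-- `φ` of the paper. -/
def phiST {d : ℕ} (S : STRun d) (u : ℕ) : ℝ :=
  if S.mem u = 0 then 0 else S.Γ u 1 + S.ζ (u + 1) 1

/-- The three-term recurrence at index `t`. -/
def recF {d : ℕ} (A : Matrix (Fin d) (Fin d) ℝ) (S : STRun d) (t : ℕ) : Prop :=
  mvE A (S.p t) =
    (if 2 ≤ S.mem t then
      (phiST S (t - 1) / (S.β (t - 1) * (1 - S.Γ t 1))) • S.p (t - 1) else 0) +
    ((1 / (1 - S.Γ t 1)) * (1 / S.β (t - 1) - phiST S t / S.β t)) • S.p t +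
    (-(1 / (S.β t * (1 - S.Γ t 1)))) • S.p (t + 1)

variable (A : Matrix (Fin d) (Fin d) ℝ) (b : E d) (S : STRun d) {m : ℕ} {τ η : ℝ}

lemma r_eqA (hg : S.g = fun u => u - mvE A u + b) (j : ℕ) :
    S.r j = b - mvE A (S.x j) := by
  rw [STRun.r, hg]; beta_reduce; abel

lemma rsubA (hg : S.g = fun u => u - mvE A u + b) (a c : ℕ) :
    S.r a - S.r c = -(mvE A (S.x a - S.x c)) := by
  rw [r_eqA A b S hg, r_eqA A b S hg, mvE_sub]; abel

lemma inner_rbar (w : E d) (t : ℕ) :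
    ⟪w, S.rbar t⟫_ℝ = ⟪w, S.r t⟫_ℝ
      - (if 2 ≤ S.mem t then S.Γ t 0 * ⟪w, S.q (t - 1)⟫_ℝ else 0)
      - (if 1 ≤ S.mem t then S.Γ t 1 * ⟪w, S.q t⟫_ℝ else 0) := by
  unfold STRun.rbar
  split_ifs <;>
    simp only [inner_sub_right, real_inner_smul_right, inner_zero_right]

lemma q_negA (hg : S.g = fun u => u - mvE A u + b) (hrun : S.IsRestarted m τ η) :
    ∀ j, 1 ≤ S.mem j → S.q j = -(mvE A (S.p j)) := by
  intro j
  induction j using Nat.strong_induction_on with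
  | _ j ih =>
    intro hj
    have hj1 : 1 ≤ j := le_trans hj (hrun.mem_le_self j)
    have hsucc : S.mem j = S.mem (j - 1) + 1 := by
      have h := hrun.mem_succ (j - 1)
      rw [Nat.sub_add_cancel hj1] at h
      omega
    by_cases h1 : S.mem j = 1
    · obtain ⟨hp, hq⟩ := hrun.pair_one j h1
      rw [hq, rsubA A b S hg, hp]
    by_cases h2 : S.mem j = 2
    · obtain ⟨hp, hq, -⟩ := hrun.pair_two j h2
      have ihq := ih (j - 1) (by omega) (by omega)
      rw [hq, rsubA A b S hg, ihq, hp]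
      simp only [mvE_sub, mvE_smul]
      module
    · have h3 : 3 ≤ S.mem j := by omega
      obtain ⟨hp, hq, -, -⟩ := hrun.pair_three j h3
      have ihq1 := ih (j - 1) (by omega) (by omega)
      have hj3 : 3 ≤ j := le_trans h3 (hrun.mem_le_self j)
      have hsucc2 : S.mem (j - 1) = S.mem (j - 2) + 1 := by
        have h := hrun.mem_succ (j - 2)
        rw [show j - 2 + 1 = j - 1 by omega] at h
        omega
      have ihq2 := ih (j - 2) (by omega) (by omega)
      rw [hq, rsubA A b S hg, ihq1, ihq2, hp]
      simp only [mvE_sub, mvE_smul]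
      module

lemma r_succA (hg : S.g = fun u => u - mvE A u + b) (hrun : S.IsRestarted m τ η) (t : ℕ) :
    S.r (t + 1) = S.rbar t - S.β t • mvE A (S.rbar t) := by
  have hQa : (if 2 ≤ S.mem t then S.Γ t 0 • S.q (t - 1) else 0)
      = -(mvE A (if 2 ≤ S.mem t then S.Γ t 0 • S.p (t - 1) else 0)) := by
    split_ifs with h
    · have ht1 : 1 ≤ t := le_trans (by omega) (hrun.mem_le_self t)
      have hm1 : 1 ≤ S.mem (t - 1) := by
        have hs := hrun.mem_succ (t - 1)
        rw [Nat.sub_add_cancel ht1] at hs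
        omega
      rw [q_negA A b S hg hrun (t - 1) hm1, mvE_smul]
      module
    · rw [mvE_zero]; simp
  have hQb : (if 1 ≤ S.mem t then S.Γ t 1 • S.q t else 0)
      = -(mvE A (if 1 ≤ S.mem t then S.Γ t 1 • S.p t else 0)) := by
    split_ifs with h
    · rw [q_negA A b S hg hrun t h, mvE_smul]; module
    · rw [mvE_zero]; simp
  have h1 : S.r (t + 1) = S.r t - mvE A (S.x (t + 1) - S.x t) := by
    have := rsubA A b S hg (t + 1) t
    linear_combination (norm := module) this
  have h2 : S.x (t + 1) - S.x t =
      -(if 2 ≤ S.mem t then S.Γ t 0 • S.p (t - 1) else 0)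
      - (if 1 ≤ S.mem t then S.Γ t 1 • S.p t else 0) + S.β t • S.rbar t := by
    rw [hrun.update t]; unfold STRun.xbar; abel
  have h3 : S.rbar t = S.r t
      + mvE A (if 2 ≤ S.mem t then S.Γ t 0 • S.p (t - 1) else 0)
      + mvE A (if 1 ≤ S.mem t then S.Γ t 1 • S.p t else 0) := by
    unfold STRun.rbar
    rw [hQa, hQb]; abel
  rw [h1, h2, mvE_add, mvE_sub, mvE_neg, mvE_smul, h3]
  abel

lemma crossOrth (hsymm : Aᵀ = A) (hg : S.g = fun u => u - mvE A u + b)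
    (hrun : S.IsRestarted m τ η) (a c : ℕ) (ha : 1 ≤ S.mem a) (hc : 1 ≤ S.mem c) :
    ⟪S.v a, S.q c⟫_ℝ = ⟪S.v c, S.q a⟫_ℝ := by
  unfold STRun.v
  cases hT : S.typeII with
  | true => simp only [hT, if_true]; exact real_inner_comm _ _
  | false =>
    simp only [hT, Bool.false_eq_true, if_false]
    rw [q_negA A b S hg hrun c hc, q_negA A b S hg hrun a ha]
    rw [inner_neg_right, inner_neg_right, ← mvE_symm A hsymm, real_inner_comm]

lemma vq_prev_zero (hrun : S.IsRestarted m τ η) (t : ℕ) (h2 : 2 ≤ S.mem t) :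
    ⟪S.v (t - 1), S.q t⟫_ℝ = 0 := by
  by_cases h : S.mem t = 2
  · exact (hrun.pair_two t h).2.2
  · exact (hrun.pair_three t (by omega)).2.2.2

end Aux

section KeyP
variable {d : ℕ} (A : Matrix (Fin d) (Fin d) ℝ) (b : E d) (S : STRun d) {m : ℕ} {τ η : ℝ}

lemma keyP_build (hrun : S.IsRestarted m τ η) (u : ℕ) (hu1 : 1 ≤ S.mem u)
    (hphi : 3 ≤ S.mem u → S.Γ (u - 1) 0 + S.ζ u 0 = 0) :
    S.p u = S.β (u - 1) • S.rbar (u - 1) - phiST S (u - 1) • S.p (u - 1) := by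
  have hu : 1 ≤ u := le_trans hu1 (hrun.mem_le_self u)
  have hus : S.mem u = S.mem (u - 1) + 1 := by
    have h := hrun.mem_succ (u - 1)
    rw [Nat.sub_add_cancel hu] at h
    omega
  have hupd : S.x u = S.xbar (u - 1) + S.β (u - 1) • S.rbar (u - 1) := by
    have h := hrun.update (u - 1)
    rwa [Nat.sub_add_cancel hu] at h
  by_cases h1 : S.mem u = 1
  · have hm0 : S.mem (u - 1) = 0 := by omega
    obtain ⟨hp, -⟩ := hrun.pair_one u h1
    rw [hp, hupd]
    unfold STRun.xbar phiST
    rw [if_neg (by omega), if_neg (by omega), if_pos hm0]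
    module
  by_cases h2 : S.mem u = 2
  · have hm1 : S.mem (u - 1) = 1 := by omega
    obtain ⟨hp, -, -⟩ := hrun.pair_two u h2
    rw [hp, hupd]
    unfold STRun.xbar phiST
    rw [if_neg (by omega), if_pos (by omega), if_neg (by omega),
      Nat.sub_add_cancel hu]
    module
  · have h3 : 3 ≤ S.mem u := by omega
    have hm2 : 2 ≤ S.mem (u - 1) := by omega
    obtain ⟨hp, -, -, -⟩ := hrun.pair_three u h3
    have hz := hphi h3
    have hz' : S.Γ (u - 1) 0 • S.p (u - 2) = -(S.ζ u 0 • S.p (u - 2)) := by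
      rw [show S.Γ (u - 1) 0 = -(S.ζ u 0) by linarith]
      module
    rw [hp, hupd]
    unfold STRun.xbar phiST
    rw [if_pos hm2, if_pos (by omega), if_neg (by omega),
      Nat.sub_add_cancel hu, show u - 1 - 1 = u - 2 by omega, hz']
    module

end KeyP

section AvExp
variable {d : ℕ} (A : Matrix (Fin d) (Fin d) ℝ) (b : E d) (S : STRun d) {m : ℕ} {τ η : ℝ}

lemma Av_expand (hg : S.g = fun u => u - mvE A u + b) (hrun : S.IsRestarted m τ η)
    (i : ℕ) (hi : 1 ≤ S.mem i) (hi1 : 1 ≤ S.mem (i + 1)) (hrec : recF A S i) :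
    ∃ c0 c1 c2 : ℝ, mvE A (S.v i) =
      (if 2 ≤ S.mem i then c0 • S.v (i - 1) else 0) + c1 • S.v i + c2 • S.v (i + 1) := by
  unfold recF at hrec
  unfold STRun.v
  cases hT : S.typeII with
  | false =>
    simp only [hT, Bool.false_eq_true, if_false]
    exact ⟨_, _, _, hrec⟩
  | true =>
    simp only [hT, if_true]
    refine ⟨phiST S (i - 1) / (S.β (i - 1) * (1 - S.Γ i 1)),
      (1 / (1 - S.Γ i 1)) * (1 / S.β (i - 1) - phiST S i / S.β i),
      -(1 / (S.β i * (1 - S.Γ i 1))), ?_⟩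
    have e0 : S.q i = -(mvE A (S.p i)) := q_negA A b S hg hrun i hi
    have e1 : S.q (i + 1) = -(mvE A (S.p (i + 1))) := q_negA A b S hg hrun (i + 1) hi1
    calc mvE A (S.q i) = -(mvE A (mvE A (S.p i))) := by rw [e0, mvE_neg]
      _ = _ := by
          rw [hrec]
          by_cases h2 : 2 ≤ S.mem i
          · have hii : 1 ≤ i := le_trans (by omega) (hrun.mem_le_self i)
            have hm1 : 1 ≤ S.mem (i - 1) := by
              have h := hrun.mem_succ (i - 1)
              rw [Nat.sub_add_cancel hii] at h
              omega
            have e2 : S.q (i - 1) = -(mvE A (S.p (i - 1))) :=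
              q_negA A b S hg hrun (i - 1) hm1
            rw [if_pos h2, if_pos h2]
            simp only [mvE_add, mvE_smul]
            rw [e0, e1, e2]
            module
          · rw [if_neg h2, if_neg h2]
            simp only [mvE_add, mvE_smul, mvE_zero]
            rw [e0, e1]
            module

lemma inner_Av_eq_zero (hg : S.g = fun u => u - mvE A u + b)
    (hrun : S.IsRestarted m τ η) (i : ℕ) (hi : 1 ≤ S.mem i) (hi1 : 1 ≤ S.mem (i + 1))
    (hrec : recF A S i) (w : E d)
    (h0 : 2 ≤ S.mem i → ⟪S.v (i - 1), w⟫_ℝ = 0)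
    (h1 : ⟪S.v i, w⟫_ℝ = 0) (h2 : ⟪S.v (i + 1), w⟫_ℝ = 0) :
    ⟪mvE A (S.v i), w⟫_ℝ = 0 := by
  obtain ⟨c0, c1, c2, he⟩ := Av_expand A b S hg hrun i hi hi1 hrec
  rw [he]
  simp only [inner_add_left, real_inner_smul_left, h1, h2]
  by_cases hc : 2 ≤ S.mem i
  · rw [if_pos hc, real_inner_smul_left, h0 hc]; ring
  · rw [if_neg hc, inner_zero_left]; ring

end AvExp

section Main
variable {d : ℕ} (A : Matrix (Fin d) (Fin d) ℝ) (b : E d) (S : STRun d) {m : ℕ} {τ η : ℝ}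

set_option maxHeartbeats 2000000 in
lemma main_inv

    (hsymm : Aᵀ = A)
    (hpd : ∀ y : E d, y ≠ 0 → 0 < ⟪y, mvE A y⟫_ℝ)
    (hg : S.g = fun u => u - mvE A u + b)
    (hβpos : ∀ j, 0 < S.β j)
    (hrun : S.IsRestarted m τ η)
    (s N : ℕ) (hs1 : 1 ≤ s)
    (hcyc : ∀ j, s ≤ j → j ≤ N → S.mem j = j - s + 1)
    (hms : S.mem (s - 1) = 0)
    (hne : ∀ j, j ≤ N → S.r j ≠ 0) :
    ∀ t, s ≤ t → t ≤ N →
      (S.p t = S.β (t - 1) • S.rbar (t - 1) - phiST S (t - 1) • S.p (t - 1)) ∧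
      (∀ i, s ≤ i → i + 1 < t → ⟪S.v i, S.r t⟫_ℝ = 0) ∧
      (∀ i, s ≤ i → i < t → ⟪S.v i, S.q t⟫_ℝ = 0) ∧
      (∀ i, s ≤ i → i ≤ t → ⟪S.v i, S.rbar t⟫_ℝ = 0) ∧
      ((1 - S.Γ t 1) ≠ 0 ∧ ⟪S.v t, S.q t⟫_ℝ ≠ 0) ∧
      (2 ≤ S.mem t →
        S.Γ t 0 * ⟪S.v (t - 1), S.q (t - 1)⟫_ℝ = ⟪S.v (t - 1), S.r t⟫_ℝ ∧
        phiST S (t - 1) * ⟪S.v (t - 1), S.q (t - 1)⟫_ℝ = ⟪S.v (t - 1), S.r t⟫_ℝ) ∧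
      (2 ≤ S.mem t → t + 1 ≤ N → S.Γ t 0 + S.ζ (t + 1) 0 = 0) ∧
      (t + 1 ≤ N → recF A S t) := by
  intro t
  induction t using Nat.strong_induction_on with
  | _ t IH =>
  intro hst htN
  have ht1 : 1 ≤ t := le_trans hs1 hst
  have hmt : S.mem t = t - s + 1 := hcyc t hst htN
  have hm1t : 1 ≤ S.mem t := by omega
  have hmpred : S.mem t = S.mem (t - 1) + 1 := by
    rcases eq_or_lt_of_le hst with h | h
    · have h1 : S.mem (t - 1) = 0 := by rw [← h]; exact hms
      omega
    · have h1 : S.mem (t - 1) = t - 1 - s + 1 := hcyc (t - 1) (by omega) (by omega)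
      omega
  have hq_t : S.q t = -(mvE A (S.p t)) := q_negA A b S hg hrun t hm1t
  have hL2 : S.r t = S.rbar (t - 1) - S.β (t - 1) • mvE A (S.rbar (t - 1)) := by
    have h := r_succA A b S hg hrun (t - 1)
    rwa [Nat.sub_add_cancel ht1] at h
  -- Component 1: keyP
  have hkeyP : S.p t = S.β (t - 1) • S.rbar (t - 1) - phiST S (t - 1) • S.p (t - 1) := by
    refine keyP_build S hrun t hm1t ?_
    intro h3
    have hH' := (IH (t - 1) (by omega) (by omega) (by omega)).2.2.2.2.2.2.1
    have h := hH' (by omega) (by omega)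
    rwa [Nat.sub_add_cancel ht1] at h
  -- keyQ
  have hkeyQ : S.q t = -(S.β (t - 1) • mvE A (S.rbar (t - 1)))
      - phiST S (t - 1) • S.q (t - 1) := by
    rw [hq_t]
    conv_lhs => rw [hkeyP]
    by_cases hm0 : S.mem (t - 1) = 0
    · have hphi0 : phiST S (t - 1) = 0 := by rw [phiST, if_pos hm0]
      rw [hphi0]
      simp only [mvE_sub, mvE_smul]
      module
    · rw [q_negA A b S hg hrun (t - 1) (by omega)]
      simp only [mvE_sub, mvE_smul]
      module
  -- Component 2: inner products with r t
  have hr_t : ∀ i, s ≤ i → i + 1 < t → ⟪S.v i, S.r t⟫_ℝ = 0 := by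
    intro i hi hit
    have h_im : S.mem i = i - s + 1 := hcyc i hi (by omega)
    have hmi : 1 ≤ S.mem i := by omega
    have hmi1 : 1 ≤ S.mem (i + 1) := by
      rw [hcyc (i + 1) (by omega) (by omega)]; omega
    have hCtm := (IH (t - 1) (by omega) (by omega) (by omega)).2.2.2.1
    have hRi := (IH i (by omega) hi (by omega)).2.2.2.2.2.2.2 (by omega)
    rw [hL2, inner_sub_right, real_inner_smul_right]
    have h1 : ⟪S.v i, S.rbar (t - 1)⟫_ℝ = 0 := hCtm i hi (by omega)
    have h2 : ⟪S.v i, mvE A (S.rbar (t - 1))⟫_ℝ = 0 := by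
      rw [← mvE_symm A hsymm]
      refine inner_Av_eq_zero A b S hg hrun i hmi hmi1 hRi _ ?_ ?_ ?_
      · intro hc
        exact hCtm (i - 1) (by omega) (by omega)
      · exact hCtm i hi (by omega)
      · exact hCtm (i + 1) (by omega) (by omega)
    rw [h1, h2]; ring
  -- Component 3: inner products with q t
  have hq_tt : ∀ i, s ≤ i → i < t → ⟪S.v i, S.q t⟫_ℝ = 0 := by
    intro i hi hit
    have h2m : 2 ≤ S.mem t := by omega
    by_cases hi1 : i = t - 1
    · rw [hi1]; exact vq_prev_zero S hrun t h2m
    by_cases hi2 : i = t - 2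
    · have h3 : 3 ≤ S.mem t := by omega
      rw [hi2]; exact (hrun.pair_three t h3).2.2.1
    · have h3 : 3 ≤ S.mem t := by omega
      obtain ⟨-, hqd, -, -⟩ := hrun.pair_three t h3
      rw [hqd]
      simp only [inner_sub_right, real_inner_smul_right]
      rw [hr_t i hi (by omega),
        (IH (t - 1) (by omega) (by omega) (by omega)).2.1 i hi (by omega),
        (IH (t - 2) (by omega) (by omega) (by omega)).2.2.1 i hi (by omega),
        (IH (t - 1) (by omega) (by omega) (by omega)).2.2.1 i hi (by omega)]
      ring
  -- Component 4: inner products with rbar t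
  have hrb_t : ∀ i, s ≤ i → i ≤ t → ⟪S.v i, S.rbar t⟫_ℝ = 0 := by
    intro i hi hit
    rcases eq_or_lt_of_le hit with he | hlt
    · rw [he]; exact hrun.orth_last t hm1t
    by_cases hi1 : i = t - 1
    · have h2m : 2 ≤ S.mem t := by omega
      rw [hi1]; exact hrun.orth_prev t h2m
    · rw [inner_rbar, hr_t i hi (by omega), hq_tt i hi hlt]
      have hqm : (if 2 ≤ S.mem t then S.Γ t 0 * ⟪S.v i, S.q (t - 1)⟫_ℝ else 0) = 0 := by
        split_ifs with h
        · rw [(IH (t - 1) (by omega) (by omega) (by omega)).2.2.1 i hi (by omega)]; ring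
        · rfl
      rw [hqm]
      split_ifs <;> ring
  -- Component 5: nondegeneracy
  have hDpair : 2 ≤ S.mem t → ⟪S.v t, S.q (t - 1)⟫_ℝ = 0 := by
    intro h2m
    rw [crossOrth A b S hsymm hg hrun t (t - 1) hm1t (by omega)]
    exact vq_prev_zero S hrun t h2m
  have hIr : ⟪S.v t, S.r t⟫_ℝ = S.Γ t 1 * ⟪S.v t, S.q t⟫_ℝ := by
    have h0 := hrun.orth_last t hm1t
    rw [inner_rbar, if_pos hm1t] at h0
    by_cases h2m : 2 ≤ S.mem t
    · rw [if_pos h2m, hDpair h2m] at h0; linarith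
    · rw [if_neg h2m] at h0; linarith
  have hphi_term : phiST S (t - 1) * ⟪S.v t, S.q (t - 1)⟫_ℝ = 0 := by
    by_cases h2m : 2 ≤ S.mem t
    · rw [hDpair h2m]; ring
    · have h0 : S.mem (t - 1) = 0 := by omega
      rw [phiST, if_pos h0]; ring
  have hqr : S.q t - S.r t = -(S.rbar (t - 1)) - phiST S (t - 1) • S.q (t - 1) := by
    rw [hkeyQ]
    conv_lhs => rw [hL2]
    module
  have hrbne : S.rbar (t - 1) ≠ 0 := by
    intro h0
    apply hne t htN
    rw [hL2, h0, mvE_zero]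
    simp
  have hCpred : phiST S (t - 1) * ⟪S.v (t - 1), S.rbar (t - 1)⟫_ℝ = 0 := by
    by_cases h2m : 2 ≤ S.mem t
    · rw [(IH (t - 1) (by omega) (by omega) (by omega)).2.2.2.1 (t - 1) (by omega) le_rfl]
      ring
    · rw [phiST, if_pos (by omega)]; ring
  have hvrb : ⟪S.v t, S.rbar (t - 1)⟫_ℝ ≠ 0 := by
    have h2 : 0 < S.β (t - 1) := hβpos (t - 1)
    unfold STRun.v at hCpred ⊢
    cases hT : S.typeII with
    | false =>
      simp only [hT, Bool.false_eq_true, if_false] at hCpred ⊢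
      have h1 : 0 < ⟪S.rbar (t - 1), S.rbar (t - 1)⟫_ℝ := by
        rw [real_inner_self_eq_norm_sq]
        exact pow_pos (norm_pos_iff.mpr hrbne) 2
      intro hcon
      rw [hkeyP, inner_sub_left, real_inner_smul_left, real_inner_smul_left] at hcon
      nlinarith [hCpred]
    | true =>
      simp only [hT, if_true] at hCpred ⊢
      have h1 : 0 < ⟪S.rbar (t - 1), mvE A (S.rbar (t - 1))⟫_ℝ := hpd _ hrbne
      intro hcon
      rw [hkeyQ, inner_sub_left, inner_neg_left, real_inner_smul_left,
        real_inner_smul_left] at hcon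
      have hsw : ⟪mvE A (S.rbar (t - 1)), S.rbar (t - 1)⟫_ℝ
          = ⟪S.rbar (t - 1), mvE A (S.rbar (t - 1))⟫_ℝ := real_inner_comm _ _
      rw [hsw] at hcon
      nlinarith [hCpred]
  have hprod : (1 - S.Γ t 1) * ⟪S.v t, S.q t⟫_ℝ = -⟪S.v t, S.rbar (t - 1)⟫_ℝ := by
    have h1 : ⟪S.v t, S.q t - S.r t⟫_ℝ = -⟪S.v t, S.rbar (t - 1)⟫_ℝ := by
      rw [hqr, inner_sub_right, inner_neg_right, real_inner_smul_right]
      linarith [hphi_term]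
    rw [inner_sub_right, hIr] at h1
    linarith [h1]
  have hnondeg : (1 - S.Γ t 1) ≠ 0 ∧ ⟪S.v t, S.q t⟫_ℝ ≠ 0 := by
    have h2 : (1 - S.Γ t 1) * ⟪S.v t, S.q t⟫_ℝ ≠ 0 := by
      rw [hprod]; exact neg_ne_zero.mpr hvrb
    exact mul_ne_zero_iff.mp h2
  -- Component 6: F
  have hF : 2 ≤ S.mem t →
      S.Γ t 0 * ⟪S.v (t - 1), S.q (t - 1)⟫_ℝ = ⟪S.v (t - 1), S.r t⟫_ℝ ∧
      phiST S (t - 1) * ⟪S.v (t - 1), S.q (t - 1)⟫_ℝ = ⟪S.v (t - 1), S.r t⟫_ℝ := by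
    intro h2m
    have hm1p : 1 ≤ S.mem (t - 1) := by omega
    have hvq : ⟪S.v (t - 1), S.q t⟫_ℝ = 0 := vq_prev_zero S hrun t h2m
    have f1 : S.Γ t 0 * ⟪S.v (t - 1), S.q (t - 1)⟫_ℝ = ⟪S.v (t - 1), S.r t⟫_ℝ := by
      have h0 := hrun.orth_prev t h2m
      rw [inner_rbar, if_pos h2m, if_pos hm1t, hvq] at h0
      linarith
    have hmid : 2 ≤ S.mem (t - 1) → ⟪S.v (t - 1), S.q (t - 2)⟫_ℝ = 0 := by
      intro h2m'
      have e : t - 1 - 1 = t - 2 := by omega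
      have hm2s : S.mem (t - 2) = t - 2 - s + 1 := hcyc (t - 2) (by omega) (by omega)
      rw [crossOrth A b S hsymm hg hrun (t - 1) (t - 2) hm1p (by omega)]
      have h := vq_prev_zero S hrun (t - 1) h2m'
      rwa [e] at h
    have f2 : S.Γ (t - 1) 1 * ⟪S.v (t - 1), S.q (t - 1)⟫_ℝ = ⟪S.v (t - 1), S.r (t - 1)⟫_ℝ := by
      have h0 := hrun.orth_last (t - 1) hm1p
      rw [inner_rbar, if_pos hm1p] at h0
      by_cases h2m' : 2 ≤ S.mem (t - 1)
      · rw [if_pos h2m', show t - 1 - 1 = t - 2 by omega, hmid h2m'] at h0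
        linarith
      · rw [if_neg h2m'] at h0; linarith
    have f3 : S.ζ t 1 * ⟪S.v (t - 1), S.q (t - 1)⟫_ℝ
        = ⟪S.v (t - 1), S.r t⟫_ℝ - ⟪S.v (t - 1), S.r (t - 1)⟫_ℝ := by
      by_cases h2' : S.mem t = 2
      · obtain ⟨-, hqd, -⟩ := hrun.pair_two t h2'
        have h0 := hvq
        rw [hqd] at h0
        simp only [inner_sub_right, real_inner_smul_right] at h0
        linarith
      · have h3 : 3 ≤ S.mem t := by omega
        obtain ⟨-, hqd, -, -⟩ := hrun.pair_three t h3
        have h0 := hvq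
        rw [hqd] at h0
        simp only [inner_sub_right, real_inner_smul_right] at h0
        rw [hmid (by omega)] at h0
        linarith
    have hphi_eq : phiST S (t - 1) = S.Γ (t - 1) 1 + S.ζ t 1 := by
      rw [phiST, if_neg (by omega), Nat.sub_add_cancel ht1]
    refine ⟨f1, ?_⟩
    rw [hphi_eq, add_mul]
    linarith
  -- Component 7: H
  have hH : 2 ≤ S.mem t → t + 1 ≤ N → S.Γ t 0 + S.ζ (t + 1) 0 = 0 := by
    intro h2m htN1
    have hm1p : 1 ≤ S.mem (t - 1) := by omega
    have hDpred : ⟪S.v (t - 1), S.q (t - 1)⟫_ℝ ≠ 0 :=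
      (IH (t - 1) (by omega) (by omega) (by omega)).2.2.2.2.1.2
    have hRpred := (IH (t - 1) (by omega) (by omega) (by omega)).2.2.2.2.2.2.2 (by omega)
    have e : t - 1 + 1 = t := by omega
    have hr1 : ⟪S.v (t - 1), S.r (t + 1)⟫_ℝ = 0 := by
      rw [r_succA A b S hg hrun t, inner_sub_right, real_inner_smul_right]
      have h1 : ⟪S.v (t - 1), S.rbar t⟫_ℝ = 0 := hrb_t (t - 1) (by omega) (by omega)
      have h2 : ⟪S.v (t - 1), mvE A (S.rbar t)⟫_ℝ = 0 := by
        rw [← mvE_symm A hsymm]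
        refine inner_Av_eq_zero A b S hg hrun (t - 1) hm1p
          (by rw [e]; exact hm1t) hRpred _ ?_ ?_ ?_
        · intro hc
          rw [show t - 1 - 1 = t - 2 by omega]
          exact hrb_t (t - 2) (by omega) (by omega)
        · exact hrb_t (t - 1) (by omega) (by omega)
        · rw [e]; exact hrb_t t hst le_rfl
      rw [h1, h2]; ring
    have hm3 : 3 ≤ S.mem (t + 1) := by
      rw [hcyc (t + 1) (by omega) htN1]; omega
    obtain ⟨-, hqd, ho2, -⟩ := hrun.pair_three (t + 1) hm3
    have e1 : t + 1 - 2 = t - 1 := by omega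
    have e2 : t + 1 - 1 = t := by omega
    rw [hqd, e1, e2] at ho2
    simp only [inner_sub_right, real_inner_smul_right] at ho2
    rw [hr1, vq_prev_zero S hrun t h2m] at ho2
    have f1 := (hF h2m).1
    have hz : (S.Γ t 0 + S.ζ (t + 1) 0) * ⟪S.v (t - 1), S.q (t - 1)⟫_ℝ = 0 := by
      rw [add_mul]; linarith
    rcases mul_eq_zero.mp hz with h | h
    · exact h
    · exact absurd h hDpred
  -- Component 8: the recurrence
  have hRec : t + 1 ≤ N → recF A S t := by
    intro htN1
    have hβ1 : S.β (t - 1) ≠ 0 := ne_of_gt (hβpos (t - 1))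
    have hβ2 : S.β t ≠ 0 := ne_of_gt (hβpos t)
    have hΓ : (1 - S.Γ t 1) ≠ 0 := hnondeg.1
    have hm1sp : 1 ≤ S.mem (t + 1) := by
      rw [hcyc (t + 1) (by omega) htN1]; omega
    have hkeyP2 : S.p (t + 1) = S.β t • S.rbar t - phiST S t • S.p t := by
      have h := keyP_build S hrun (t + 1) hm1sp (by
        intro h3
        have h2m : 2 ≤ S.mem t := by
          rw [hcyc (t + 1) (by omega) htN1] at h3; omega
        simpa only [Nat.add_sub_cancel] using hH h2m htN1)
      simpa only [Nat.add_sub_cancel] using h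
    have hrb0 : S.rbar (t - 1) = (1 / S.β (t - 1)) • (S.p t + phiST S (t - 1) • S.p (t - 1)) := by
      have h : S.β (t - 1) • S.rbar (t - 1) = S.p t + phiST S (t - 1) • S.p (t - 1) := by
        linear_combination (norm := module) -hkeyP
      rw [← h, smul_smul, one_div, inv_mul_cancel₀ hβ1, one_smul]
    have hrb1 : S.rbar t = (1 / S.β t) • (S.p (t + 1) + phiST S t • S.p t) := by
      have h : S.β t • S.rbar t = S.p (t + 1) + phiST S t • S.p t := by
        linear_combination (norm := module) -hkeyP2
      rw [← h, smul_smul, one_div, inv_mul_cancel₀ hβ2, one_smul]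
    have hrteq : S.r t = S.rbar t + (if 2 ≤ S.mem t then S.Γ t 0 • S.q (t - 1) else 0)
        + S.Γ t 1 • S.q t := by
      unfold STRun.rbar
      rw [if_pos hm1t]
      abel
    have hGq : (if 2 ≤ S.mem t then S.Γ t 0 • S.q (t - 1) else 0)
        = phiST S (t - 1) • (-(mvE A (S.p (t - 1)))) := by
      split_ifs with h2m
      · have hD := (IH (t - 1) (by omega) (by omega) (by omega)).2.2.2.2.1.2
        have hΓ0 : S.Γ t 0 = phiST S (t - 1) := by
          obtain ⟨f1, f2⟩ := hF h2m
          exact mul_right_cancel₀ hD (f1.trans f2.symm)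
        rw [hΓ0, q_negA A b S hg hrun (t - 1) (by omega)]
      · have h0 : phiST S (t - 1) = 0 := by rw [phiST, if_pos (by omega)]
        rw [h0]; simp
    have hA1 : mvE A (S.p t) = S.β (t - 1) • mvE A (S.rbar (t - 1))
        - phiST S (t - 1) • mvE A (S.p (t - 1)) := by
      conv_lhs => rw [hkeyP]
      rw [mvE_sub, mvE_smul, mvE_smul]
    have hA2 : S.β (t - 1) • mvE A (S.rbar (t - 1)) = S.rbar (t - 1) - S.r t := by
      linear_combination (norm := module) hL2
    have master : (1 - S.Γ t 1) • mvE A (S.p t)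
        = ((1 / S.β (t - 1)) - phiST S t / S.β t) • S.p t
          + (phiST S (t - 1) * (1 / S.β (t - 1))) • S.p (t - 1)
          + (-(1 / S.β t)) • S.p (t + 1) := by
      have e1 : mvE A (S.p t) = (S.rbar (t - 1) - S.r t)
          - phiST S (t - 1) • mvE A (S.p (t - 1)) := by
        rw [hA1, hA2]
      rw [hrteq, hGq, hq_t, hrb0, hrb1] at e1
      linear_combination (norm := module) e1
    unfold recF
    have hXeq : mvE A (S.p t) = (1 / (1 - S.Γ t 1)) • ((1 - S.Γ t 1) • mvE A (S.p t)) := by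
      rw [smul_smul, one_div, inv_mul_cancel₀ hΓ, one_smul]
    rw [hXeq, master]
    have hif : (if 2 ≤ S.mem t then
        (phiST S (t - 1) / (S.β (t - 1) * (1 - S.Γ t 1))) • S.p (t - 1) else 0)
        = (phiST S (t - 1) / (S.β (t - 1) * (1 - S.Γ t 1))) • S.p (t - 1) := by
      split_ifs with h
      · rfl
      · have h0 : phiST S (t - 1) = 0 := by rw [phiST, if_pos (by omega)]
        rw [h0]; simp
    rw [hif]
    match_scalars <;> (field_simp; try ring) <;> tauto
  exact ⟨hkeyP, hr_t, hq_tt, hrb_t, hnondeg, hF, hH, hRec⟩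

end Main

/-- The tridiagonal matrix `T̄_k` (as a function `ℕ → ℕ → ℝ`). -/
def TbST {d : ℕ} (S : STRun d) (s : ℕ) : ℕ → ℕ → ℝ := fun i j =>
  if i = j then (1 / (1 - S.Γ (s + j) 1)) * (1 / S.β (s + j - 1) - phiST S (s + j) / S.β (s + j))
  else if i = j + 1 then -(1 / (S.β (s + j) * (1 - S.Γ (s + j) 1)))
  else if j = i + 1 then phiST S (s + j - 1) / (S.β (s + j - 1) * (1 - S.Γ (s + j) 1))
  else 0

/-- Proposition 6.2 of the paper.  For the restarted
Type-I/Type-II ST-AM applied to `g(x) = (I-A)x + b` with `A` symmetric positive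
definite, if `m_{k+1} ≥ 2` at iteration `k+1` then
`A p_k = t_k^{(m_k-1)} p_{k-1} + t_k^{(m_k)} p_k + t_k^{(m_k+1)} p_{k+1}`
(with `p_{k-m_k} := 0`, i.e. the `p_{k-1}` term is absent when `m_k = 1`),
where `t_k^{(m_k-1)} = φ_{k-1}/(β_{k-1}(1-Γ_k^{(m_k)}))`,
`t_k^{(m_k)} = (1/(1-Γ_k^{(m_k)}))(1/β_{k-1} - φ_k/β_k)`,
`t_k^{(m_k+1)} = -1/(β_k(1-Γ_k^{(m_k)}))`, and `φ_t := 0` for `m_t = 0` and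
`φ_t := Γ_t^{(m_t)} + ζ_{t+1}^{(m_t)} = Γ_{t+1}^{(m_t)} = v_tᵀr_{t+1}/v_tᵀq_t`
for `m_t ≥ 1`.  Consequently there is a tridiagonal `T̄_k ∈ ℝ^{(m_k+1)×m_k}`
with `A P_k = P_{k+1} T̄_k = P_k T_k + p_{k+1} t_k^{(m_k+1)} e_{m_k}ᵀ`
(stated column by column). -/
theorem stmt_15 {d : ℕ} (A : Matrix (Fin d) (Fin d) ℝ) (b : E d)
    (hsymm : Aᵀ = A)
    (hpd : ∀ y : E d, y ≠ 0 → 0 < ⟪y, mvE A y⟫_ℝ)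
    (m : ℕ) (hm : 1 ≤ m) (τ η : ℝ) (hτ0 : 0 < τ) (hτ1 : τ < 1) (hη : 0 < η)
    (S : STRun d) (hg : S.g = fun u => u - mvE A u + b)
    (hβpos : ∀ j, 0 < S.β j)
    (hrun : S.IsRestarted m τ η)
    (k : ℕ) (hmem : 2 ≤ S.mem (k + 1))
    (hne : ∀ j ≤ k + 1, S.r j ≠ 0) :
    -- the three-term recurrence, with `φ_t = 0` when `m_t = 0`
    (mvE A (S.p k) =
        (if 2 ≤ S.mem k then
          ((if S.mem (k - 1) = 0 then 0 else S.Γ (k - 1) 1 + S.ζ k 1) /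
            (S.β (k - 1) * (1 - S.Γ k 1))) • S.p (k - 1)
        else 0) +
        ((1 / (1 - S.Γ k 1)) *
          (1 / S.β (k - 1) -
            (if S.mem k = 0 then 0 else S.Γ k 1 + S.ζ (k + 1) 1) / S.β k)) • S.p k +
        (-(1 / (S.β k * (1 - S.Γ k 1)))) • S.p (k + 1)) ∧
    -- `φ_k = Γ_k^{(m_k)} + ζ_{k+1}^{(m_k)} = Γ_{k+1}^{(m_k)} = v_kᵀ r_{k+1} / v_kᵀ q_k`
    (1 ≤ S.mem k →
      S.Γ k 1 + S.ζ (k + 1) 1 = S.Γ (k + 1) 0 ∧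
      S.Γ (k + 1) 0 = ⟪S.v k, S.r (k + 1)⟫_ℝ / ⟪S.v k, S.q k⟫_ℝ) ∧
    -- the tridiagonal matrix `T̄_k` with `A P_k = P_{k+1} T̄_k = P_k T_k + …`
    (∃ Tb : ℕ → ℕ → ℝ,
      (∀ i j : ℕ, j + 1 < i ∨ i + 1 < j → Tb i j = 0) ∧
      Tb (S.mem k) (S.mem k - 1) = -(1 / (S.β k * (1 - S.Γ k 1))) ∧
      (∀ j < S.mem k,
        mvE A (S.p (k - S.mem k + 1 + j)) =
          ∑ i ∈ Finset.range (S.mem k + 1), Tb i j • S.p (k - S.mem k + 1 + i)) ∧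
      (∀ j < S.mem k,
        mvE A (S.p (k - S.mem k + 1 + j)) =
          (∑ i ∈ Finset.range (S.mem k), Tb i j • S.p (k - S.mem k + 1 + i)) +
            (if j + 1 = S.mem k then Tb (S.mem k) j else 0) • S.p (k + 1))) := by
  have hMk1 : S.mem (k + 1) = S.mem k + 1 := by
    rcases hrun.mem_succ k with h | h
    · exact h
    · omega
  have hMle : S.mem k ≤ k := hrun.mem_le_self k
  have hM1 : 1 ≤ S.mem k := by omega
  set s := k - S.mem k + 1 with hs
  have hs1 : 1 ≤ s := by omega
  have hsk : s ≤ k := by omega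
  have hchain : ∀ i, i ≤ S.mem (k + 1) → S.mem (k + 1 - i) = S.mem (k + 1) - i := by
    intro i
    induction i with
    | zero => intro _; simp
    | succ n ihn =>
      intro hle
      have h1 := ihn (by omega)
      have h2 : k + 1 - n = (k + 1 - (n + 1)) + 1 := by omega
      rcases hrun.mem_succ (k + 1 - (n + 1)) with h | h <;> rw [h2] at h1 <;> omega
  have hcyc : ∀ j, s ≤ j → j ≤ k + 1 → S.mem j = j - s + 1 := by
    intro j hj1 hj2
    have h := hchain (k + 1 - j) (by omega)
    rw [show k + 1 - (k + 1 - j) = j by omega] at h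
    omega
  have hms : S.mem (s - 1) = 0 := by
    have h := hchain (S.mem (k + 1)) le_rfl
    rw [show s - 1 = k + 1 - S.mem (k + 1) by omega]
    omega
  have hInv := main_inv A b S hsymm hpd hg hβpos hrun s (k + 1) hs1 hcyc hms hne
  refine ⟨?_, ?_, ?_⟩
  · -- Part 1: the three-term recurrence at `k`
    have hrecK := (hInv k hsk (by omega)).2.2.2.2.2.2.2 le_rfl
    unfold recF at hrecK
    simp only [phiST] at hrecK
    rw [show k - 1 + 1 = k by omega] at hrecK
    exact hrecK
  · -- Part 2
    intro hm1k
    have hF1 := (hInv (k + 1) (by omega) le_rfl).2.2.2.2.2.1 hmem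
    simp only [Nat.add_sub_cancel] at hF1
    have hD := (hInv k hsk (by omega)).2.2.2.2.1.2
    have hphik : phiST S k = S.Γ k 1 + S.ζ (k + 1) 1 := by
      rw [phiST, if_neg (by omega)]
    constructor
    · have h := mul_right_cancel₀ hD (hF1.2.trans hF1.1.symm)
      rw [hphik] at h
      exact h
    · rw [eq_div_iff hD]
      exact hF1.1
  · -- Part 3: the tridiagonal matrix
    have hiii : ∀ j < S.mem k, mvE A (S.p (s + j)) =
        ∑ i ∈ Finset.range (S.mem k + 1), TbST S s i j • S.p (s + i) := by
      intro j hj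
      have ht := (hInv (s + j) (by omega) (by omega)).2.2.2.2.2.2.2 (by omega)
      unfold recF at ht
      have hmem_sj : S.mem (s + j) = j + 1 := by
        rw [hcyc (s + j) (by omega) (by omega)]; omega
      rw [ht]
      cases j with
      | zero =>
        simp only [Nat.add_zero] at hmem_sj ⊢
        rw [if_neg (show ¬ 2 ≤ S.mem s by omega)]
        have he : ∀ i ∈ Finset.range (S.mem k + 1), TbST S s i 0 • S.p (s + i)
            = (if i = 0 then
                ((1 / (1 - S.Γ s 1)) *
                  (1 / S.β (s - 1) - phiST S s / S.β s)) • S.p (s + i) else 0)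
              + (if i = 1 then
                (-(1 / (S.β s * (1 - S.Γ s 1)))) • S.p (s + i) else 0) := by
          intro i _
          unfold TbST
          by_cases h0 : i = 0
          · subst h0; norm_num
          · by_cases h1 : i = 1
            · subst h1; norm_num
            · rw [if_neg h0, if_neg (by omega), if_neg (by omega), if_neg h0, if_neg h1]
              simp
        rw [Finset.sum_congr rfl he, Finset.sum_add_distrib,
          Finset.sum_ite_eq' (Finset.range (S.mem k + 1)) 0,
          Finset.sum_ite_eq' (Finset.range (S.mem k + 1)) 1,
          if_pos (show (0 : ℕ) ∈ Finset.range (S.mem k + 1) by simp),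
          if_pos (show (1 : ℕ) ∈ Finset.range (S.mem k + 1) by simp; omega)]
        module
      | succ n =>
        have he : ∀ i ∈ Finset.range (S.mem k + 1), TbST S s i (n + 1) • S.p (s + i)
            = (if i = n + 1 then
                ((1 / (1 - S.Γ (s + (n + 1)) 1)) *
                  (1 / S.β (s + (n + 1) - 1) - phiST S (s + (n + 1)) / S.β (s + (n + 1)))) •
                    S.p (s + i) else 0)
              + (if i = n + 2 then
                (-(1 / (S.β (s + (n + 1)) * (1 - S.Γ (s + (n + 1)) 1)))) • S.p (s + i) else 0)
              + (if i = n then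
                (phiST S (s + (n + 1) - 1) /
                  (S.β (s + (n + 1) - 1) * (1 - S.Γ (s + (n + 1)) 1))) • S.p (s + i) else 0) := by
          intro i _
          unfold TbST
          by_cases h0 : i = n + 1
          · subst h0
            rw [if_pos rfl, if_pos rfl, if_neg (by omega), if_neg (by omega)]
            simp
          · by_cases h1 : i = n + 2
            · subst h1
              rw [if_neg (by omega), if_pos rfl, if_pos rfl, if_neg (by omega)]
              simp
            · by_cases h2 : i = n
              · subst h2
                rw [if_neg (by omega), if_neg (by omega), if_pos rfl, if_neg (by omega),
                  if_neg (by omega), if_pos rfl]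
                simp
              · rw [if_neg (by omega), if_neg (by omega), if_neg (by omega),
                  if_neg h0, if_neg h1, if_neg h2]
                simp
        rw [Finset.sum_congr rfl he, Finset.sum_add_distrib, Finset.sum_add_distrib,
          Finset.sum_ite_eq' (Finset.range (S.mem k + 1)) (n + 1),
          Finset.sum_ite_eq' (Finset.range (S.mem k + 1)) (n + 2),
          Finset.sum_ite_eq' (Finset.range (S.mem k + 1)) n,
          if_pos (show n + 1 ∈ Finset.range (S.mem k + 1) by simp; omega),
          if_pos (show n + 2 ∈ Finset.range (S.mem k + 1) by simp; omega),
          if_pos (show n ∈ Finset.range (S.mem k + 1) by simp; omega),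
          if_pos (show 2 ≤ S.mem (s + (n + 1)) by rw [hmem_sj]; omega)]
        rw [show s + (n + 1) - 1 = s + n by omega, show s + (n + 1) + 1 = s + (n + 2) by omega]
        module
    refine ⟨TbST S s, ?_, ?_, hiii, ?_⟩
    · intro i j h
      unfold TbST
      split_ifs with h1 h2 h3
      · exfalso; omega
      · exfalso; omega
      · exfalso; omega
      · rfl
    · unfold TbST
      rw [if_neg (by omega), if_pos (by omega)]
      rw [show s + (S.mem k - 1) = k by omega]
    · intro j hj
      rw [hiii j hj, Finset.sum_range_succ]
      have he : TbST S s (S.mem k) j • S.p (s + S.mem k)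
          = (if j + 1 = S.mem k then TbST S s (S.mem k) j else 0) • S.p (k + 1) := by
        rw [show s + S.mem k = k + 1 by omega]
        by_cases hj1 : j + 1 = S.mem k
        · rw [if_pos hj1]
        · rw [if_neg hj1]
          have hz : TbST S s (S.mem k) j = 0 := by
            unfold TbST
            rw [if_neg (by omega), if_neg (by omega), if_neg (by omega)]
          rw [hz]
      rw [he]


end
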